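/- If S and T are semigroups each containing an element of infinite order, then the direct product S × T contains uncountably many pairwise non-isomorphic subsemigroups. -/

import Mathlib

/-- `spow s n` is the `(n+1)`-st power of `s` in a semigroup. -/
def spow {S : Type*} [Semigroup S] (s : S) : ℕ → S
  | 0 => s
  | n + 1 => spow s n * s

lemma spow_mul_spow {S : Type*} [Semigroup S] (s : S) (m n : ℕ) :
    spow s m * spow s n = spow s (m + n + 1) := by
  induction n with
  | zero => rfl
  | succ n ih =>
      show spow s m * (spow s n * s) = _
      rw [← mul_assoc, ih]; rfl

namespace NNS

/-! ### Generic invariants of subsets of ℕ × ℕ under addition -/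

/-- indecomposable elements of `P` -/
def Ind (P : Set (ℕ × ℕ)) : Set (ℕ × ℕ) :=
  {x | x ∈ P ∧ ¬ ∃ u ∈ P, ∃ v ∈ P, u + v = x}

def pairsTo (P : Set (ℕ × ℕ)) (x : ℕ × ℕ) : Set ((ℕ × ℕ) × (ℕ × ℕ)) :=
  {p | p.1 ∈ Ind P ∧ p.2 ∈ Ind P ∧ p.1 + p.2 = x}

noncomputable def r (P : Set (ℕ × ℕ)) (x : ℕ × ℕ) : ℕ := (pairsTo P x).ncard

def Fib (P : Set (ℕ × ℕ)) (k : ℕ) : Set (ℕ × ℕ) :=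
  {x | (∃ u ∈ Ind P, u + u = x) ∧ r P x = k}

def K (P : Set (ℕ × ℕ)) : Set ℕ := {k | (Fib P k).Infinite}

def AddClosed (P : Set (ℕ × ℕ)) : Prop := ∀ a ∈ P, ∀ b ∈ P, a + b ∈ P

lemma pairsTo_finite (P : Set (ℕ × ℕ)) (x : ℕ × ℕ) : (pairsTo P x).Finite := by
  have h : pairsTo P x ⊆ (Set.Iic x) ×ˢ (Set.Iic x) := by
    rintro ⟨u, v⟩ ⟨hu, hv, huv⟩
    have h1 : u.1 + v.1 = x.1 := by rw [← huv]; simp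
    have h2 : u.2 + v.2 = x.2 := by rw [← huv]; simp
    constructor
    · exact ⟨by simp; omega, by simp; omega⟩
    · exact ⟨by simp; omega, by simp; omega⟩
  exact Set.Finite.subset (Set.Finite.prod (Set.finite_Iic x) (Set.finite_Iic x)) h

lemma ind_iff_of_iso {P Q : Set (ℕ × ℕ)} (hP : AddClosed P)
    {φ : ℕ × ℕ → ℕ × ℕ} (hbij : Set.BijOn φ P Q)
    (hadd : ∀ a ∈ P, ∀ b ∈ P, φ (a + b) = φ a + φ b)
    {u : ℕ × ℕ} (hu : u ∈ P) : u ∈ Ind P ↔ φ u ∈ Ind Q := by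
  constructor
  · rintro ⟨-, hind⟩
    refine ⟨hbij.mapsTo hu, ?_⟩
    rintro ⟨a', ha', b', hb', hab⟩
    obtain ⟨a, ha, rfl⟩ := hbij.surjOn ha'
    obtain ⟨b, hb, rfl⟩ := hbij.surjOn hb'
    rw [← hadd a ha b hb] at hab
    have : a + b = u := hbij.injOn (hP a ha b hb) hu hab
    exact hind ⟨a, ha, b, hb, this⟩
  · rintro ⟨-, hind⟩
    refine ⟨hu, ?_⟩
    rintro ⟨a, ha, b, hb, hab⟩
    exact hind ⟨φ a, hbij.mapsTo ha, φ b, hbij.mapsTo hb, by rw [← hadd a ha b hb, hab]⟩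

lemma r_eq_of_iso {P Q : Set (ℕ × ℕ)} (hP : AddClosed P)
    {φ : ℕ × ℕ → ℕ × ℕ} (hbij : Set.BijOn φ P Q)
    (hadd : ∀ a ∈ P, ∀ b ∈ P, φ (a + b) = φ a + φ b)
    {x : ℕ × ℕ} (hx : x ∈ P) : r Q (φ x) = r P x := by
  have hIndP : Ind P ⊆ P := fun u hu => hu.1
  have himg : pairsTo Q (φ x) = (fun p => (φ p.1, φ p.2)) '' pairsTo P x := by
    ext ⟨u', v'⟩
    constructor
    · rintro ⟨hu', hv', huv⟩
      obtain ⟨u, hu, rfl⟩ := hbij.surjOn hu'.1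
      obtain ⟨v, hv, rfl⟩ := hbij.surjOn hv'.1
      have huvP : u + v = x := by
        apply hbij.injOn (hP u hu v hv) hx
        rw [hadd u hu v hv, huv]
      exact ⟨(u, v), ⟨(ind_iff_of_iso hP hbij hadd hu).mpr hu',
        (ind_iff_of_iso hP hbij hadd hv).mpr hv', huvP⟩, rfl⟩
    · rintro ⟨⟨u, v⟩, ⟨hu, hv, huv⟩, heq⟩
      rw [← heq]
      refine ⟨(ind_iff_of_iso hP hbij hadd (hIndP hu)).mp hu,
        (ind_iff_of_iso hP hbij hadd (hIndP hv)).mp hv, ?_⟩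
      show φ u + φ v = φ x
      rw [← hadd u (hIndP hu) v (hIndP hv), huv]
  unfold r
  rw [himg]
  apply Set.ncard_image_of_injOn
  rintro ⟨u, v⟩ ⟨hu, hv, -⟩ ⟨u2, v2⟩ ⟨hu2, hv2, -⟩ heq
  simp only [Prod.mk.injEq] at heq
  have e1 := hbij.injOn (hIndP hu) (hIndP hu2) heq.1
  have e2 := hbij.injOn (hIndP hv) (hIndP hv2) heq.2
  rw [Prod.ext_iff]
  exact ⟨e1, e2⟩

/-- transport of the invariant along an additive bijection -/
theorem K_subset_of_iso (P Q : Set (ℕ × ℕ)) (hP : AddClosed P) (hQ : AddClosed Q)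
    (φ : ℕ × ℕ → ℕ × ℕ) (hbij : Set.BijOn φ P Q)
    (hadd : ∀ a ∈ P, ∀ b ∈ P, φ (a + b) = φ a + φ b) : K P ⊆ K Q := by
  intro k hk
  have hFibP : Fib P k ⊆ P := by
    rintro x ⟨⟨u, hu, huu⟩, -⟩
    rw [← huu]; exact hP u hu.1 u hu.1
  have himg : φ '' Fib P k ⊆ Fib Q k := by
    rintro x' ⟨x, ⟨⟨u, hu, huu⟩, hr⟩, rfl⟩
    have hxP : x ∈ P := by rw [← huu]; exact hP u hu.1 u hu.1
    refine ⟨⟨φ u, (ind_iff_of_iso hP hbij hadd hu.1).mp hu, ?_⟩, ?_⟩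
    · rw [← hadd u hu.1 u hu.1, huu]
    · rw [r_eq_of_iso hP hbij hadd hxP, hr]
  have hinf : (φ '' Fib P k).Infinite :=
    (Set.infinite_image_iff (hbij.injOn.mono hFibP)).mpr hk
  exact hinf.mono himg

theorem K_eq_of_iso (P Q : Set (ℕ × ℕ)) (hP : AddClosed P) (hQ : AddClosed Q)
    (φ : ℕ × ℕ → ℕ × ℕ) (hbij : Set.BijOn φ P Q)
    (hadd : ∀ a ∈ P, ∀ b ∈ P, φ (a + b) = φ a + φ b) : K P = K Q := by
  set ψ := Function.invFunOn φ P with hψ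
  have hInv : Set.InvOn ψ φ P Q :=
    ⟨hbij.injOn.leftInvOn_invFunOn, hbij.surjOn.rightInvOn_invFunOn⟩
  have hbij' : Set.BijOn ψ Q P := Set.BijOn.symm hInv.symm hbij
  have hadd' : ∀ a ∈ Q, ∀ b ∈ Q, ψ (a + b) = ψ a + ψ b := by
    intro a ha b hb
    obtain ⟨x, hx, rfl⟩ := hbij.surjOn ha
    obtain ⟨y, hy, rfl⟩ := hbij.surjOn hb
    rw [← hadd x hx y hy, hInv.1 (hP x hx y hy), hInv.1 hx, hInv.1 hy]
  exact le_antisymm (K_subset_of_iso P Q hP hQ φ hbij hadd)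
    (K_subset_of_iso Q P hQ hP ψ hbij' hadd')

/-! ### The construction -/

def e (j : ℕ) : ℕ := 4 * 5 ^ j
def c (n : ℕ) : ℕ := 100 ^ (n + 2) + 2
/-- window radius -/
def D (n : ℕ) : ℕ := 4 * 5 ^ n

open Classical in
noncomputable def bet (B : Set ℕ) (n : ℕ) : ℕ :=
  if (Nat.unpair n).1 ∈ B ∧ (Nat.unpair n).1 ≤ n then (Nat.unpair n).1 else 0

def blk (B : Set ℕ) (n : ℕ) : Set ℕ :=
  {x | x = c n ∨ ∃ j, 1 ≤ j ∧ j ≤ bet B n ∧ (x = c n + e j ∨ x + e j = c n)}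

def A (B : Set ℕ) : Set ℕ := {2} ∪ ⋃ n, blk B n

def U (B : Set ℕ) : Set (ℕ × ℕ) :=
  {p | (2 ≤ p.1 ∧ 2 ≤ p.2) ∨ (p.1 = 1 ∧ p.2 ∈ A B)}

/-! #### basic facts -/

lemma bet_le (B : Set ℕ) (n : ℕ) : bet B n ≤ n := by
  unfold bet; split
  · next h => exact h.2
  · exact Nat.zero_le n

lemma bet_mem (B : Set ℕ) (n : ℕ) : bet B n = 0 ∨ bet B n ∈ B := by
  unfold bet; split
  · next h => exact Or.inr h.1
  · exact Or.inl rfl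

lemma bet_pair (B : Set ℕ) (hB : B ⊆ Set.Ici 1) (m t : ℕ) (hm : m = 0 ∨ m ∈ B) :
    bet B (Nat.pair m t) = m := by
  unfold bet
  rw [Nat.unpair_pair]
  rcases hm with hm | hm
  · subst hm
    split
    · next h =>
        exfalso; exact absurd (hB h.1) (by norm_num)
    · rfl
  · split
    · rfl
    · next h => exact absurd ⟨hm, Nat.left_le_pair m t⟩ h

lemma e_le (n j : ℕ) (h : j ≤ n) : e j ≤ D n := by
  unfold e D; exact Nat.mul_le_mul_left 4 (Nat.pow_le_pow_right (by norm_num) h)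

lemma pow_bound (n : ℕ) : 4 * 5 ^ n < 100 ^ (n + 1) := by
  have h5 : 5 ^ n ≤ 100 ^ n := Nat.pow_le_pow_left (by norm_num) n
  have h2 : (100:ℕ) ^ (n+1) = 100 * 100 ^ n := by ring
  have hp : 1 ≤ (100:ℕ) ^ n := Nat.one_le_pow _ _ (by norm_num)
  calc 4 * 5 ^ n ≤ 4 * 100 ^ n := by omega
  _ < 100 * 100 ^ n := by omega
  _ = 100 ^ (n+1) := h2.symm

lemma c_big (n : ℕ) : 100 ^ (n + 1) * 100 ≤ c n := by
  unfold c
  have : 100 ^ (n + 2) = 100 ^ (n+1) * 100 := by ring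
  omega

/-- window: every element of `blk B n` is within `4*5^n` of `c n`. -/
lemma blk_window {B : Set ℕ} {n x : ℕ} (hx : x ∈ blk B n) :
    c n ≤ x + D n ∧ x ≤ c n + D n := by
  rcases hx with h | ⟨j, hj1, hj2, h | h⟩
  · omega
  all_goals
    have hje : e j ≤ D n := e_le n j (le_trans hj2 (bet_le B n))
    omega

lemma c_even (n : ℕ) : c n % 2 = 0 := by
  unfold c
  have : 100 ^ (n+2) % 2 = 0 := by
    have : (2:ℕ) ∣ 100 ^ (n+2) := dvd_pow (by norm_num) (by omega)
    omega
  omega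

lemma e_even (j : ℕ) : e j % 2 = 0 := by
  unfold e; omega

lemma e_pos (j : ℕ) (hj : 1 ≤ j) : 20 ≤ e j := by
  unfold e
  have : 5 ^ 1 ≤ 5 ^ j := Nat.pow_le_pow_right (by norm_num) hj
  simp at this; omega

lemma A_even_ge {B : Set ℕ} {a : ℕ} (ha : a ∈ A B) : 2 ≤ a ∧ a % 2 = 0 := by
  rcases ha with h | ha
  · simp at h; omega
  · rcases Set.mem_iUnion.mp ha with ⟨n, hn⟩
    have hw := blk_window hn
    have hDc : 2 * D n + 2 ≤ c n := by
      have h1 : D n < 100 ^ (n+1) := pow_bound n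
      have h2 : 100 ^ (n + 1) * 100 ≤ c n := c_big n
      have h3 : 1 ≤ (100:ℕ) ^ (n+1) := Nat.one_le_pow _ _ (by norm_num)
      have h4 : 2 * 100 ^ (n+1) + 2 ≤ 100 ^ (n+1) * 100 := by nlinarith
      have h5 : 2 * D n + 2 ≤ 2 * 100 ^ (n+1) + 2 := by
        have := pow_bound n
        unfold D at *
        omega
      exact le_trans h5 (le_trans h4 h2)
    constructor
    · omega
    · rcases hn with h | ⟨j, hj1, hj2, h | h⟩
      · rw [h]; exact c_even n
      · have := c_even n; have := e_even j; omega
      · have := c_even n; have := e_even j; omega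

lemma two_mem_A (B : Set ℕ) : 2 ∈ A B := Or.inl rfl

lemma cn_mem_A (B : Set ℕ) (n : ℕ) : c n ∈ A B :=
  Or.inr (Set.mem_iUnion.mpr ⟨n, Or.inl rfl⟩)

/-! #### 5-power lemmas -/

lemma five_L1 {i j k : ℕ} (hij : i ≠ j) : 5 ^ i + 5 ^ j ≠ 2 * 5 ^ k := by
  intro h
  -- wlog i < j
  rcases Nat.lt_or_ge i j with hlt | hge
  · -- 5^j < 2*5^k so j ≤ k, then 2*5^k ≥ 2*5^j > 5^i + 5^j
    have h1 : 5 ^ j < 2 * 5 ^ k := by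
      have : 0 < 5 ^ i := pow_pos (by norm_num) i
      omega
    have hjk : j ≤ k := by
      by_contra hc
      push_neg at hc
      have : 5 ^ (k+1) ≤ 5 ^ j := Nat.pow_le_pow_right (by norm_num) hc
      have : 5 ^ (k+1) = 5 * 5 ^ k := by ring
      omega
    have h2 : 2 * 5 ^ j ≤ 2 * 5 ^ k := by
      have := Nat.pow_le_pow_right (show 1 ≤ 5 by norm_num) hjk
      omega
    have h3 : 5 ^ i < 5 ^ j := Nat.pow_lt_pow_right (by norm_num) hlt
    omega
  · have hlt : j < i := lt_of_le_of_ne hge (Ne.symm hij)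
    have h1 : 5 ^ i < 2 * 5 ^ k := by
      have : 0 < 5 ^ j := pow_pos (by norm_num) j
      omega
    have hik : i ≤ k := by
      by_contra hc
      push_neg at hc
      have h4 : 5 ^ (k+1) ≤ 5 ^ i := Nat.pow_le_pow_right (by norm_num) hc
      have h5 : 5 ^ (k+1) = 5 * 5 ^ k := by ring
      omega
    have h2 : 2 * 5 ^ i ≤ 2 * 5 ^ k := by
      have := Nat.pow_le_pow_right (show 1 ≤ 5 by norm_num) hik
      omega
    have h3 : 5 ^ j < 5 ^ i := Nat.pow_lt_pow_right (by norm_num) hlt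
    omega

lemma five_L2 (i j k : ℕ) : 5 ^ j + 2 * 5 ^ k ≠ 5 ^ i := by
  intro h
  have hki : k < i := by
    by_contra hc
    push_neg at hc
    have : 5 ^ i ≤ 5 ^ k := Nat.pow_le_pow_right (by norm_num) hc
    have : 0 < 5 ^ j := pow_pos (by norm_num) j
    omega
  have hji : j < i := by
    by_contra hc
    push_neg at hc
    have : 5 ^ i ≤ 5 ^ j := Nat.pow_le_pow_right (by norm_num) hc
    have : 0 < 5 ^ k := pow_pos (by norm_num) k
    omega
  have h1 : 5 ^ j ≤ 5 ^ (i-1) := Nat.pow_le_pow_right (by norm_num) (by omega)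
  have h2 : 5 ^ k ≤ 5 ^ (i-1) := Nat.pow_le_pow_right (by norm_num) (by omega)
  have h3 : 5 ^ i = 5 * 5 ^ (i-1) := by
    rw [← pow_succ']
    congr 1
    omega
  have h0 : 0 < 5 ^ (i-1) := pow_pos (by norm_num) _
  have h4 : (5:ℕ) * 5 ^ (i-1) ≤ 3 * 5 ^ (i-1) := by
    calc (5:ℕ) * 5 ^ (i-1) = 5 ^ i := h3.symm
    _ = 5 ^ j + 2 * 5 ^ k := h.symm
    _ ≤ 3 * 5 ^ (i-1) := by omega
  nlinarith

lemma five_L0 (i k : ℕ) : 5 ^ i ≠ 2 * 5 ^ k := by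
  intro h
  have h1 : 5 ^ i % 2 = 1 := by
    rw [Nat.pow_mod]; norm_num
  omega

/-! #### separation lemmas -/

lemma hpow100 {a b : ℕ} (h : a ≤ b) : (100:ℕ)^a ≤ 100^b := Nat.pow_le_pow_right (by norm_num) h

lemma h5le100 (a : ℕ) : (5:ℕ)^a ≤ 100^a := Nat.pow_le_pow_left (by norm_num) a

lemma arith1 {Ci Cj Cn X di dj dn : ℕ} (h1 : Ci + Cj ≤ 2 * Cn + (di + dj + 2 * dn))
    (k1 : 10000 * X ≤ Ci) (hX : 1 ≤ X) (k2 : Cn ≤ 100 * X + 2) (k3 : di ≤ 4 * X)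
    (k4 : dj ≤ di) (k5 : dn ≤ di) : False := by omega

lemma c_lb (i : ℕ) : 10000 * 100 ^ i ≤ c i := by
  unfold c
  rw [show (100:ℕ) ^ (i + 2) = 10000 * 100 ^ i from by ring]
  exact Nat.le_add_right _ _

lemma c_ub {n i : ℕ} (h : n ≤ i) : c n ≤ 10000 * 100 ^ i + 2 := by
  unfold c
  have h2 : (100:ℕ) ^ (n + 2) ≤ 100 ^ (i + 2) := hpow100 (by omega)
  rw [show (100:ℕ) ^ (i + 2) = 10000 * 100 ^ i from by ring] at h2
  exact Nat.add_le_add_right h2 2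

lemma c_ub' {n i : ℕ} (h : n < i) : c n ≤ 100 * 100 ^ i + 2 := by
  unfold c
  have h2 : (100:ℕ) ^ (n + 2) ≤ 100 ^ (i + 1) := hpow100 (by omega)
  rw [show (100:ℕ) ^ (i + 1) = 100 * 100 ^ i from by ring] at h2
  exact Nat.add_le_add_right h2 2

lemma D_le_of_le {j i : ℕ} (h : j ≤ i) : D j ≤ D i := by
  unfold D
  exact Nat.mul_le_mul_left 4 (Nat.pow_le_pow_right (by norm_num) h)

lemma D_le_pow (i : ℕ) : D i ≤ 4 * 100 ^ i := by
  unfold D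
  exact Nat.mul_le_mul_left 4 (h5le100 i)

lemma sep_aux1 {i j n : ℕ} (hij : j ≤ i)
    (h1 : c i + c j ≤ 2 * c n + (D i + D j + 2 * D n)) : i ≤ n := by
  by_contra hc
  push_neg at hc
  exact arith1 h1 (c_lb i) (Nat.one_le_pow _ _ (by norm_num)) (c_ub' hc)
    (D_le_pow i) (D_le_of_le hij) (D_le_of_le (by omega))

lemma arith2 {Ci Cj Cn Y di dj dn : ℕ} (h2 : 2 * Cn ≤ Ci + Cj + (di + dj + 2 * dn))
    (m1 : 10000 * Y + 2 ≤ Cn) (hY : 1 ≤ Y) (m2 : Ci ≤ 100 * Y + 2)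
    (m3 : Cj ≤ 10000 * Y + 2) (k3 : di ≤ dn) (k4 : dj ≤ dn) (k5 : dn ≤ 4 * Y) : False := by
  omega

lemma c_eq (n : ℕ) : c n = 10000 * 100 ^ n + 2 := by
  unfold c
  rw [show (100:ℕ) ^ (n + 2) = 10000 * 100 ^ n from by ring]

lemma sep_aux2 {i j n : ℕ} (hin : i ≤ n) (hjn : j ≤ n)
    (h2 : 2 * c n ≤ c i + c j + (D i + D j + 2 * D n)) : i = n := by
  by_contra hc
  have hi : i < n := by omega
  exact arith2 h2 (le_of_eq (c_eq n).symm) (Nat.one_le_pow n 100 (by norm_num))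
    (c_ub' hi) (c_ub hjn) (D_le_of_le hin) (D_le_of_le hjn) (D_le_pow n)

lemma sep_core {i j n : ℕ}
    (h1 : c i + c j ≤ 2 * c n + (D i + D j + 2 * D n))
    (h2 : 2 * c n ≤ c i + c j + (D i + D j + 2 * D n)) : i = n ∧ j = n := by
  have hij : i ≤ n ∧ j ≤ n := by
    rcases le_total i j with h | h
    · have := sep_aux1 (n := n) h (by omega)
      exact ⟨le_trans h this, this⟩
    · have := sep_aux1 (n := n) h h1
      exact ⟨this, le_trans h this⟩
  exact ⟨sep_aux2 hij.1 hij.2 h2, sep_aux2 hij.2 hij.1 (by omega)⟩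

lemma sep_blocks {B : Set ℕ} {i j n p q a : ℕ} (hp : p ∈ blk B i) (hq : q ∈ blk B j)
    (ha : a ∈ blk B n) (h : p + q = 2 * a) : i = n ∧ j = n := by
  have wp := blk_window hp
  have wq := blk_window hq
  have wa := blk_window ha
  exact sep_core (by omega) (by omega)

lemma arith3a {Y Zj ej en : ℕ} (hY : 1 ≤ Y) (hZj : Zj ≤ 10000 * Y + 2)
    (hej : ej ≤ 4 * Y) (hen : en ≤ 4 * Y) (hZn : 10000 * Y + 2 ≤ Zn)
    (h : 2 + (Zj + ej) ≥ 2 * Zn - 2 * en ∧ 2 + Zj ≤ 2 * Zn + 2 * en + ej) : False := by omega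

lemma sep_two {B : Set ℕ} {j n p a : ℕ} (hp : p ∈ blk B j) (ha : a ∈ blk B n) :
    2 + p ≠ 2 * a := by
  intro h
  have wp := blk_window hp
  have wa := blk_window ha
  -- compare block scales: need  |c j - 2 c n| ≤ D j + 2 D n + 2  to be impossible
  have hcontra : ¬ (c j ≤ 2 * c n + (D j + 2 * D n + 2) ∧ 2 * c n ≤ c j + (D j + 2 * D n + 2)) := by
    rintro ⟨k1, k2⟩
    unfold c D at k1 k2
    rcases le_or_gt j n with hjn | hnj
    · -- c j ≤ c n , but 2*c n ≤ c j + small : impossible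
      have b1 : (100:ℕ) ^ (j+2) ≤ 100 ^ (n+2) := hpow100 (by omega)
      have b2 : (5:ℕ) ^ j ≤ 5 ^ n := Nat.pow_le_pow_right (by norm_num) hjn
      have b3 : (5:ℕ) ^ n ≤ 100 ^ n := h5le100 n
      have b4 : (100:ℕ) ^ (n+2) = 10000 * 100 ^ n := by ring
      have b5 : 1 ≤ (100:ℕ) ^ n := Nat.one_le_pow _ _ (by norm_num)
      -- generalize
      set X := (100:ℕ) ^ n with hX
      set Pj := (100:ℕ) ^ (j+2) with hPj
      set fj := (5:ℕ) ^ j with hfj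
      set fn := (5:ℕ) ^ n with hfn
      omega
    · have b1 : (100:ℕ) ^ (n+2) ≤ 100 ^ (j+1) := hpow100 (by omega)
      have b2 : (100:ℕ) ^ (j+1) * 100 = 100 ^ (j+2) := by ring
      have b3 : (5:ℕ) ^ n ≤ 5 ^ j := Nat.pow_le_pow_right (by norm_num) (by omega)
      have b4 : (5:ℕ) ^ j ≤ 100 ^ j := h5le100 j
      have b5 : 1 ≤ (100:ℕ) ^ j := Nat.one_le_pow _ _ (by norm_num)
      have b6 : (100:ℕ) ^ (j+1) = 100 * 100 ^ j := by ring
      set X := (100:ℕ) ^ j with hX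
      set Pn := (100:ℕ) ^ (n+2) with hPn
      set Pj1 := (100:ℕ) ^ (j+1) with hPj1
      set fj := (5:ℕ) ^ j with hfj
      set fn := (5:ℕ) ^ n with hfn
      omega
  exact hcontra ⟨by omega, by omega⟩

lemma blk_big {B : Set ℕ} {n x : ℕ} (hx : x ∈ blk B n) : 100 ≤ x := by
  have w := blk_window hx
  have hc : 2 * D n + 200 ≤ c n := by
    have h1 : D n < 100 ^ (n+1) := pow_bound n
    have h2 : 100 ^ (n + 1) * 100 ≤ c n := c_big n
    have h3 : 100 ≤ (100:ℕ) ^ (n+1) := by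
      calc (100:ℕ) = 100 ^ 1 := by norm_num
      _ ≤ 100 ^ (n + 1) := hpow100 (by omega)
    nlinarith
  omega

lemma e_inj {j1 j2 : ℕ} (h : e j1 = e j2) : j1 = j2 := by
  unfold e at h
  have h5 : (5:ℕ) ^ j1 = 5 ^ j2 := by omega
  exact Nat.pow_right_injective (by norm_num) h5

/-! #### the classification of solutions of p + q = 2a inside A -/

/-- within-block classification -/
lemma in_blk_classify {B : Set ℕ} {n p q a : ℕ} (hp : p ∈ blk B n) (hq : q ∈ blk B n)
    (ha : a ∈ blk B n) (h : p + q = 2 * a) :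
    (p = a ∧ q = a) ∨
    (∃ j, 1 ≤ j ∧ j ≤ bet B n ∧ a = c n ∧
      ((p = c n + e j ∧ q + e j = c n) ∨ (q = c n + e j ∧ p + e j = c n))) := by
  have epos : ∀ j, 1 ≤ j → 20 ≤ e j := fun j hj => e_pos j hj
  -- 5-power reductions, stated on e-values
  have L0 : ∀ j1 j3, e j1 ≠ 2 * e j3 := by
    intro j1 j3 hh
    unfold e at hh
    exact five_L0 j1 j3 (by omega)
  have L1 : ∀ j1 j2 j3, j1 ≠ j2 → e j1 + e j2 ≠ 2 * e j3 := by
    intro j1 j2 j3 hne hh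
    unfold e at hh
    exact five_L1 hne (k := j3) (by omega)
  have L2 : ∀ j1 j2 j3, e j2 + 2 * e j3 ≠ e j1 := by
    intro j1 j2 j3 hh
    unfold e at hh
    exact five_L2 j1 j2 j3 (by omega)
  rcases ha with ha | ⟨j3, hj31, hj32, ha | ha⟩
  · -- a = c n
    rcases hp with hp | ⟨j1, hj11, hj12, hp | hp⟩
    · -- p = c n
      rcases hq with hq | ⟨j2, hj21, hj22, hq | hq⟩
      · exact Or.inl ⟨by omega, by omega⟩
      · exact absurd h (by have := epos j2 hj21; omega)
      · exact absurd h (by have := epos j2 hj21; omega)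
    · -- p = c n + e j1
      rcases hq with hq | ⟨j2, hj22, hj23, hq | hq⟩
      · exact absurd h (by have := epos j1 hj11; omega)
      · exact absurd h (by have := epos j1 hj11; have := epos j2 hj22; omega)
      · -- p = c + e j1, q = c - e j2 : e j1 = e j2
        have hee : e j1 = e j2 := by omega
        have hj : j1 = j2 := e_inj hee
        subst hj
        exact Or.inr ⟨j1, hj11, hj12, ha, Or.inl ⟨hp, hq⟩⟩
    · -- p = c n - e j1
      rcases hq with hq | ⟨j2, hj22, hj23, hq | hq⟩
      · exact absurd h (by have := epos j1 hj11; omega)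
      · have hee : e j2 = e j1 := by omega
        have hj : j2 = j1 := e_inj hee
        subst hj
        exact Or.inr ⟨j2, hj11, hj12, ha, Or.inr ⟨hq, hp⟩⟩
      · exact absurd h (by have := epos j1 hj11; have := epos j2 hj22; omega)
  · -- a = c n + e j3
    rcases hp with hp | ⟨j1, hj11, hj12, hp | hp⟩
    · rcases hq with hq | ⟨j2, hj21, hj22, hq | hq⟩
      · exact absurd h (by have := epos j3 hj31; omega)
      · exact absurd (show e j2 = 2 * e j3 by omega) (L0 j2 j3)
      · exact absurd h (by have := epos j2 hj21; have := epos j3 hj31; omega)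
    · rcases hq with hq | ⟨j2, hj21, hj22, hq | hq⟩
      · exact absurd (show e j1 = 2 * e j3 by omega) (L0 j1 j3)
      · -- e j1 + e j2 = 2 e j3
        by_cases hje : j1 = j2
        · subst hje
          have he13 : e j1 = e j3 := by omega
          have hj13 : j1 = j3 := e_inj he13
          subst hj13
          exact Or.inl ⟨by omega, by omega⟩
        · exact absurd (show e j1 + e j2 = 2 * e j3 by omega) (L1 j1 j2 j3 hje)
      · exact absurd (show e j2 + 2 * e j3 = e j1 by omega) (L2 j1 j2 j3)
    · rcases hq with hq | ⟨j2, hj21, hj22, hq | hq⟩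
      · exact absurd h (by have := epos j1 hj11; have := epos j3 hj31; omega)
      · exact absurd (show e j1 + 2 * e j3 = e j2 by omega) (L2 j2 j1 j3)
      · exact absurd h (by have := epos j1 hj11; have := epos j3 hj31; omega)
  · -- a + e j3 = c n
    rcases hp with hp | ⟨j1, hj11, hj12, hp | hp⟩
    · rcases hq with hq | ⟨j2, hj21, hj22, hq | hq⟩
      · exact absurd h (by have := epos j3 hj31; omega)
      · exact absurd h (by have := epos j2 hj21; have := epos j3 hj31; omega)
      · exact absurd (show e j2 = 2 * e j3 by omega) (L0 j2 j3)
    · rcases hq with hq | ⟨j2, hj21, hj22, hq | hq⟩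
      · exact absurd h (by have := epos j1 hj11; have := epos j3 hj31; omega)
      · exact absurd h (by have := epos j1 hj11; have := epos j2 hj21; have := epos j3 hj31; omega)
      · exact absurd (show e j1 + 2 * e j3 = e j2 by omega) (L2 j2 j1 j3)
    · rcases hq with hq | ⟨j2, hj21, hj22, hq | hq⟩
      · exact absurd (show e j1 = 2 * e j3 by omega) (L0 j1 j3)
      · exact absurd (show e j2 + 2 * e j3 = e j1 by omega) (L2 j1 j2 j3)
      · -- p = c - e j1, q = c - e j2, a = c - e j3 : e j1 + e j2 = 2 e j3
        by_cases hje : j1 = j2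
        · subst hje
          have he13 : e j1 = e j3 := by omega
          have hj13 : j1 = j3 := e_inj he13
          subst hj13
          exact Or.inl ⟨by omega, by omega⟩
        · exact absurd (show e j1 + e j2 = 2 * e j3 by omega) (L1 j1 j2 j3 hje)

theorem sum_classify {B : Set ℕ} {p q a : ℕ} (hp : p ∈ A B) (hq : q ∈ A B) (ha : a ∈ A B)
    (h : p + q = 2 * a) :
    (p = a ∧ q = a) ∨
    (∃ n j, 1 ≤ j ∧ j ≤ bet B n ∧ a = c n ∧
      ((p = c n + e j ∧ q + e j = c n) ∨ (q = c n + e j ∧ p + e j = c n))) := by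
  have hp2 := A_even_ge hp
  have hq2 := A_even_ge hq
  rcases ha with ha2 | ha
  · -- a = 2
    simp only [Set.mem_singleton_iff] at ha2
    left
    constructor <;> omega
  · rcases Set.mem_iUnion.mp ha with ⟨n, han⟩
    have hab := blk_big han
    rcases hp with hp2' | hp
    · simp only [Set.mem_singleton_iff] at hp2'
      subst hp2'
      rcases hq with hq2' | hq
      · simp only [Set.mem_singleton_iff] at hq2'
        omega
      · rcases Set.mem_iUnion.mp hq with ⟨j, hqj⟩
        exact absurd h (sep_two hqj han)
    · rcases Set.mem_iUnion.mp hp with ⟨i, hpi⟩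
      rcases hq with hq2' | hq
      · simp only [Set.mem_singleton_iff] at hq2'
        subst hq2'
        exact absurd (show 2 + p = 2 * a by omega) (sep_two hpi han)
      · rcases Set.mem_iUnion.mp hq with ⟨j, hqj⟩
        obtain ⟨hin, hjn⟩ := sep_blocks hpi hqj han h
        rw [hin] at hpi
        rw [hjn] at hqj
        rcases in_blk_classify hpi hqj han h with h1 | ⟨j', hj1, hj2, hj3, hj4⟩
        · exact Or.inl h1
        · exact Or.inr ⟨n, j', hj1, hj2, hj3, hj4⟩

/-! #### membership and indecomposability facts for U -/

lemma U_coord {B : Set ℕ} {p : ℕ × ℕ} (hp : p ∈ U B) : 1 ≤ p.1 ∧ 2 ≤ p.2 := by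
  rcases hp with ⟨h1, h2⟩ | ⟨h1, h2⟩
  · omega
  · exact ⟨by omega, (A_even_ge h2).1⟩

lemma U_closed (B : Set ℕ) : AddClosed (U B) := by
  intro a ha b hb
  have h1 := U_coord ha
  have h2 := U_coord hb
  left
  constructor
  · show 2 ≤ a.1 + b.1; omega
  · show 2 ≤ a.2 + b.2; omega

lemma ind_L1 {B : Set ℕ} {a : ℕ} (ha : a ∈ A B) : ((1 : ℕ), a) ∈ Ind (U B) := by
  refine ⟨Or.inr ⟨rfl, ha⟩, ?_⟩
  rintro ⟨u, hu, v, hv, huv⟩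
  have h1 : u.1 + v.1 = 1 := by have := congrArg Prod.fst huv; simpa using this
  have := U_coord hu
  have := U_coord hv
  omega

lemma ind_row {B : Set ℕ} {x y : ℕ} (hx : 2 ≤ x) (hy : y = 2 ∨ y = 3) :
    ((x, y) : ℕ × ℕ) ∈ Ind (U B) := by
  refine ⟨Or.inl ⟨hx, by omega⟩, ?_⟩
  rintro ⟨u, hu, v, hv, huv⟩
  have h1 : u.2 + v.2 = y := by have := congrArg Prod.snd huv; simpa using this
  have := U_coord hu
  have := U_coord hv
  omega

lemma ind_odd {B : Set ℕ} {y : ℕ} (hy : 3 ≤ y) (hodd : y % 2 = 1) :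
    (((2 : ℕ), y) : ℕ × ℕ) ∈ Ind (U B) := by
  refine ⟨Or.inl ⟨le_refl 2, by omega⟩, ?_⟩
  rintro ⟨u, hu, v, hv, huv⟩
  have h1 : u.1 + v.1 = 2 := by have := congrArg Prod.fst huv; simpa using this
  have h2 : u.2 + v.2 = y := by have := congrArg Prod.snd huv; simpa using this
  have hcu := U_coord hu
  have hcv := U_coord hv
  have hu1 : u.1 = 1 := by omega
  have hv1 : v.1 = 1 := by omega
  have hua : u.2 ∈ A B := by
    rcases hu with ⟨h, _⟩ | ⟨_, h⟩
    · omega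
    · exact h
  have hva : v.2 ∈ A B := by
    rcases hv with ⟨h, _⟩ | ⟨_, h⟩
    · omega
    · exact h
  have := (A_even_ge hua).2
  have := (A_even_ge hva).2
  omega

lemma ind_over {B : Set ℕ} {u : ℕ × ℕ} (hu : u ∈ Ind (U B)) :
    u.1 = 1 ∨ u.2 = 2 ∨ u.2 = 3 ∨ u.1 = 2 := by
  by_contra hc
  push_neg at hc
  obtain ⟨h1, h2, h3, h4⟩ := hc
  obtain ⟨huU, hind⟩ := hu
  have hco := U_coord huU
  have hx3 : 3 ≤ u.1 := by omega
  have hy4 : 4 ≤ u.2 := by omega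
  apply hind
  rcases Nat.lt_or_ge u.1 4 with h | h
  · -- u.1 = 3 : (1,2) + (2, u.2 - 2)
    refine ⟨(1, 2), Or.inr ⟨rfl, two_mem_A B⟩, (2, u.2 - 2), Or.inl ⟨le_refl 2, by omega⟩, ?_⟩
    have : u.1 = 3 := by omega
    ext <;> simp <;> omega
  · refine ⟨(2, 2), Or.inl ⟨le_refl 2, le_refl 2⟩, (u.1 - 2, u.2 - 2), Or.inl ⟨by omega, by omega⟩, ?_⟩
    ext <;> simp <;> omega

/-! #### computation of r at signal points -/

def Pa (B : Set ℕ) (a : ℕ) : Set (ℕ × ℕ) :=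
  {pq | pq.1 ∈ A B ∧ pq.2 ∈ A B ∧ pq.1 + pq.2 = 2 * a}

lemma r_signal {B : Set ℕ} {a : ℕ} (ha : a ∈ A B) :
    r (U B) (2, 2 * a) = (Pa B a).ncard := by
  have himg : pairsTo (U B) (2, 2 * a) =
      (fun pq : ℕ × ℕ => (((1 : ℕ), pq.1), ((1 : ℕ), pq.2))) '' Pa B a := by
    ext ⟨u, v⟩
    constructor
    · rintro ⟨hu, hv, huv⟩
      dsimp only at hu hv huv
      have h1 : u.1 + v.1 = 2 := by have := congrArg Prod.fst huv; simpa using this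
      have h2 : u.2 + v.2 = 2 * a := by have := congrArg Prod.snd huv; simpa using this
      have hcu := U_coord hu.1
      have hcv := U_coord hv.1
      have hu1 : u.1 = 1 := by omega
      have hv1 : v.1 = 1 := by omega
      have hua : u.2 ∈ A B := by
        rcases hu.1 with ⟨h, _⟩ | ⟨_, h⟩
        · omega
        · exact h
      have hva : v.2 ∈ A B := by
        rcases hv.1 with ⟨h, _⟩ | ⟨_, h⟩
        · omega
        · exact h
      refine ⟨(u.2, v.2), ⟨hua, hva, h2⟩, ?_⟩
      exact Prod.ext_iff.mpr ⟨Prod.ext_iff.mpr ⟨hu1.symm, rfl⟩, Prod.ext_iff.mpr ⟨hv1.symm, rfl⟩⟩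
    · rintro ⟨⟨p, q⟩, ⟨hp, hq, hpq⟩, heq⟩
      rw [← heq]
      refine ⟨ind_L1 hp, ind_L1 hq, ?_⟩
      show ((1 : ℕ), p) + ((1 : ℕ), q) = ((2 : ℕ), 2 * a)
      ext <;> simp <;> omega
  unfold r
  rw [himg]
  apply Set.ncard_image_of_injective
  rintro ⟨p, q⟩ ⟨p', q'⟩ heq
  simp only [Prod.mk.injEq] at heq
  simp [heq.1.2, heq.2.2]

lemma D_lt_c (n : ℕ) : 2 * D n + 2 ≤ c n := by
  have h1 : D n < 100 ^ (n+1) := pow_bound n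
  have h2 : 100 ^ (n + 1) * 100 ≤ c n := c_big n
  have h3 : 1 ≤ (100:ℕ) ^ (n+1) := Nat.one_le_pow _ _ (by norm_num)
  nlinarith

lemma e_le_c {B : Set ℕ} {n j : ℕ} (hj : j ≤ bet B n) : 2 * e j + 2 ≤ c n := by
  have h1 : e j ≤ D n := e_le n j (le_trans hj (bet_le B n))
  have := D_lt_c n
  omega

lemma c_mono : StrictMono c := by
  intro a b hab
  unfold c
  exact Nat.add_lt_add_right (Nat.pow_lt_pow_right (by norm_num) (by omega)) 2

lemma c_inj : Function.Injective c := c_mono.injective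

lemma cpe_mem_A (B : Set ℕ) {n j : ℕ} (hj1 : 1 ≤ j) (hj2 : j ≤ bet B n) :
    c n + e j ∈ A B :=
  Or.inr (Set.mem_iUnion.mpr ⟨n, Or.inr ⟨j, hj1, hj2, Or.inl rfl⟩⟩)

lemma cme_mem_A (B : Set ℕ) {n j : ℕ} (hj1 : 1 ≤ j) (hj2 : j ≤ bet B n) :
    c n - e j ∈ A B := by
  refine Or.inr (Set.mem_iUnion.mpr ⟨n, Or.inr ⟨j, hj1, hj2, Or.inr ?_⟩⟩)
  have := e_le_c (B := B) hj2
  omega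

lemma Pa_center (B : Set ℕ) (n : ℕ) : (Pa B (c n)).ncard = 2 * bet B n + 1 := by
  classical
  have hele : ∀ j, j ≤ bet B n → 2 * e j + 2 ≤ c n := fun j hj => e_le_c hj
  have hepos : ∀ j, 1 ≤ j → 20 ≤ e j := fun j hj => e_pos j hj
  set F : Finset (ℕ × ℕ) := ({(c n, c n)} ∪ (Finset.Icc 1 (bet B n)).image
      (fun j => (c n + e j, c n - e j)))
      ∪ (Finset.Icc 1 (bet B n)).image (fun j => (c n - e j, c n + e j)) with hF
  have hset : Pa B (c n) = ↑F := by
    ext ⟨p, q⟩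
    simp only [Pa, Set.mem_setOf_eq, hF, Finset.coe_union, Set.mem_union, Finset.coe_image,
      Set.mem_image, Finset.mem_coe, Finset.mem_Icc, Finset.coe_singleton,
      Set.mem_singleton_iff, Prod.mk.injEq]
    constructor
    · rintro ⟨hp, hq, hpq⟩
      rcases sum_classify hp hq (cn_mem_A B n) hpq with ⟨h1, h2⟩ | ⟨n', j, hj1, hj2, hcn, hforms⟩
      · exact Or.inl (Or.inl ⟨h1, h2⟩)
      · have hnn : n = n' := c_inj hcn
        subst hnn
        rcases hforms with ⟨hp', hq'⟩ | ⟨hq', hp'⟩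
        · refine Or.inl (Or.inr ⟨j, ⟨hj1, hj2⟩, ?_, ?_⟩) <;> omega
        · refine Or.inr ⟨j, ⟨hj1, hj2⟩, ?_, ?_⟩ <;> omega
    · rintro ((⟨rfl, rfl⟩ | ⟨j, ⟨hj1, hj2⟩, hp', hq'⟩) | ⟨j, ⟨hj1, hj2⟩, hp', hq'⟩)
      · exact ⟨cn_mem_A B n, cn_mem_A B n, by ring⟩
      · subst hp'; subst hq'
        refine ⟨cpe_mem_A B hj1 hj2, cme_mem_A B hj1 hj2, ?_⟩
        have := hele j hj2
        omega
      · subst hp'; subst hq'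
        refine ⟨cme_mem_A B hj1 hj2, cpe_mem_A B hj1 hj2, ?_⟩
        have := hele j hj2
        omega
  rw [hset, Set.ncard_coe_finset]
  have hinj1 : Set.InjOn (fun j => (c n + e j, c n - e j)) ↑(Finset.Icc 1 (bet B n)) := by
    intro a _ b _ hab
    simp only [Prod.mk.injEq] at hab
    exact e_inj (by omega)
  have hinj2 : Set.InjOn (fun j => (c n - e j, c n + e j)) ↑(Finset.Icc 1 (bet B n)) := by
    intro a _ b _ hab
    simp only [Prod.mk.injEq] at hab
    exact e_inj (by omega)
  have hc1 : ((Finset.Icc 1 (bet B n)).image (fun j => (c n + e j, c n - e j))).card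
      = bet B n := by
    rw [Finset.card_image_of_injOn hinj1, Nat.card_Icc]
    omega
  have hc2 : ((Finset.Icc 1 (bet B n)).image (fun j => (c n - e j, c n + e j))).card
      = bet B n := by
    rw [Finset.card_image_of_injOn hinj2, Nat.card_Icc]
    omega
  have hd1 : Disjoint ({((c n, c n) : ℕ × ℕ)} : Finset (ℕ × ℕ))
      ((Finset.Icc 1 (bet B n)).image (fun j => (c n + e j, c n - e j))) := by
    rw [Finset.disjoint_left]
    intro x hx hximg
    simp only [Finset.mem_singleton] at hx
    subst hx
    simp only [Finset.mem_image, Finset.mem_Icc, Prod.mk.injEq] at hximg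
    obtain ⟨j, ⟨hj1, hj2⟩, hj3, hj4⟩ := hximg
    have := hepos j hj1
    omega
  have hd2 : Disjoint (({((c n, c n) : ℕ × ℕ)} : Finset (ℕ × ℕ)) ∪
      (Finset.Icc 1 (bet B n)).image (fun j => (c n + e j, c n - e j)))
      ((Finset.Icc 1 (bet B n)).image (fun j => (c n - e j, c n + e j))) := by
    rw [Finset.disjoint_left]
    intro x hx hximg
    simp only [Finset.mem_image, Finset.mem_Icc, Prod.mk.injEq] at hximg
    obtain ⟨j, ⟨hj1, hj2⟩, hj3, hj4⟩ := hximg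
    have hej := hepos j hj1
    have helj := hele j hj2
    simp only [Finset.mem_union, Finset.mem_singleton, Finset.mem_image, Finset.mem_Icc,
      Prod.mk.injEq] at hx
    rcases hx with hx | ⟨j', ⟨hj1', hj2'⟩, hj3', hj4'⟩
    · omega
    · have hej' := hepos j' hj1'
      omega
  rw [hF, Finset.card_union_of_disjoint hd2, Finset.card_union_of_disjoint hd1,
    Finset.card_singleton, hc1, hc2]
  omega

lemma Pa_all {B : Set ℕ} {a : ℕ} (ha : a ∈ A B) :
    (Pa B a).ncard = 1 ∨ ∃ n, a = c n ∧ (Pa B a).ncard = 2 * bet B n + 1 := by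
  by_cases hc : ∃ n, a = c n
  · obtain ⟨n, rfl⟩ := hc
    exact Or.inr ⟨n, rfl, Pa_center B n⟩
  · left
    have hs : Pa B a = {(a, a)} := by
      ext ⟨p, q⟩
      simp only [Pa, Set.mem_setOf_eq, Set.mem_singleton_iff, Prod.mk.injEq]
      constructor
      · rintro ⟨hp, hq, hpq⟩
        rcases sum_classify hp hq ha hpq with ⟨h1, h2⟩ | ⟨n, j, _, _, hcn, _⟩
        · exact ⟨h1, h2⟩
        · exact absurd ⟨n, hcn⟩ hc
      · rintro ⟨rfl, rfl⟩
        exact ⟨ha, ha, by ring⟩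
    rw [hs, Set.ncard_singleton]

/-! #### lower bounds for r at doubles of non-signal indecomposables -/

lemma r_lower_aux {B : Set ℕ} {x : ℕ × ℕ} {m : ℕ} (f : ℕ → (ℕ × ℕ) × (ℕ × ℕ))
    (hmem : ∀ j < m, f j ∈ pairsTo (U B) x)
    (hinj : ∀ j < m, ∀ j' < m, f j = f j' → j = j') :
    m ≤ r (U B) x := by
  classical
  have hcard : ((Finset.range m).image f).card = m := by
    rw [Finset.card_image_of_injOn, Finset.card_range]
    intro a ha b hb hab
    exact hinj a (Finset.mem_range.mp ha) b (Finset.mem_range.mp hb) hab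
  have hsub : ↑((Finset.range m).image f) ⊆ pairsTo (U B) x := by
    intro p hp
    simp only [Finset.coe_image, Set.mem_image, Finset.mem_coe, Finset.mem_range] at hp
    obtain ⟨j, hj, rfl⟩ := hp
    exact hmem j hj
  calc m = (↑((Finset.range m).image f) : Set _).ncard := by
        rw [Set.ncard_coe_finset, hcard]
    _ ≤ r (U B) x := Set.ncard_le_ncard hsub (pairsTo_finite _ _)

lemma r_row2 {B : Set ℕ} {w : ℕ} (hw : 2 ≤ w) :
    2 * w ≤ r (U B) (2 * w, 4) + 3 := by
  have h := r_lower_aux (B := B) (x := (2 * w, 4)) (m := 2 * w - 3)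
    (fun j => ((j + 2, 2), (2 * w - (j + 2), 2))) ?_ ?_
  · omega
  · intro j hj
    refine ⟨ind_row (by omega) (Or.inl rfl), ind_row (by omega) (Or.inl rfl), ?_⟩
    show ((j + 2, 2) : ℕ × ℕ) + (2 * w - (j + 2), 2) = (2 * w, 4)
    ext <;> simp <;> omega
  · intro j hj j' hj' heq
    simp only [Prod.mk.injEq] at heq
    omega

lemma r_row3 {B : Set ℕ} {w : ℕ} (hw : 2 ≤ w) :
    2 * w ≤ r (U B) (2 * w, 6) + 3 := by
  have h := r_lower_aux (B := B) (x := (2 * w, 6)) (m := 2 * w - 3)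
    (fun j => ((j + 2, 3), (2 * w - (j + 2), 3))) ?_ ?_
  · omega
  · intro j hj
    refine ⟨ind_row (by omega) (Or.inr rfl), ind_row (by omega) (Or.inr rfl), ?_⟩
    show ((j + 2, 3) : ℕ × ℕ) + (2 * w - (j + 2), 3) = (2 * w, 6)
    ext <;> simp <;> omega
  · intro j hj j' hj' heq
    simp only [Prod.mk.injEq] at heq
    omega

lemma r_col2 {B : Set ℕ} {y : ℕ} (hy : 2 ≤ y) :
    y ≤ r (U B) (4, 2 * y) + 2 := by
  have h := r_lower_aux (B := B) (x := (4, 2 * y)) (m := y - 2)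
    (fun j => ((2, 2 * j + 3), (2, 2 * y - (2 * j + 3)))) ?_ ?_
  · omega
  · intro j hj
    refine ⟨ind_odd (by omega) (by omega), ind_odd (by omega) (by omega), ?_⟩
    show ((2, 2 * j + 3) : ℕ × ℕ) + (2, 2 * y - (2 * j + 3)) = (4, 2 * y)
    ext <;> simp <;> omega
  · intro j hj j' hj' heq
    simp only [Prod.mk.injEq] at heq
    omega

/-! #### the value of the invariant -/

theorem K_U (B : Set ℕ) (hB : B ⊆ Set.Ici 1) :
    K (U B) = {k | ∃ m, (m = 0 ∨ m ∈ B) ∧ k = 2 * m + 1} := by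
  ext k
  simp only [K, Set.mem_setOf_eq]
  constructor
  · intro hinf
    -- finiteness of the three junk classes
    have hfin2 : (Fib (U B) k ∩ {x | x.2 = 4}).Finite := by
      apply Set.Finite.subset (Set.Finite.prod (Set.finite_Iic (k + 5))
        (Set.finite_singleton 4))
      rintro x ⟨⟨⟨u, hu, huu⟩, hr⟩, hx2⟩
      simp only [Set.mem_setOf_eq] at hx2
      have hx1 : x.1 = u.1 + u.1 := by rw [← huu]; simp
      have hx2' : x.2 = u.2 + u.2 := by rw [← huu]; simp
      have hcu := U_coord hu.1
      refine ⟨Set.mem_Iic.mpr ?_, Set.mem_singleton_iff.mpr hx2⟩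
      rcases Nat.lt_or_ge u.1 2 with h1 | h2
      · omega
      · have hrow := r_row2 (B := B) h2
        have hxeq : x = (2 * u.1, 4) := Prod.ext_iff.mpr ⟨by omega, hx2⟩
        rw [hxeq] at hr
        omega
    have hfin3 : (Fib (U B) k ∩ {x | x.2 = 6}).Finite := by
      apply Set.Finite.subset (Set.Finite.prod (Set.finite_Iic (k + 5))
        (Set.finite_singleton 6))
      rintro x ⟨⟨⟨u, hu, huu⟩, hr⟩, hx2⟩
      simp only [Set.mem_setOf_eq] at hx2
      have hx1 : x.1 = u.1 + u.1 := by rw [← huu]; simp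
      have hx2' : x.2 = u.2 + u.2 := by rw [← huu]; simp
      have hcu := U_coord hu.1
      refine ⟨Set.mem_Iic.mpr ?_, Set.mem_singleton_iff.mpr hx2⟩
      rcases Nat.lt_or_ge u.1 2 with h1 | h2
      · omega
      · have hrow := r_row3 (B := B) h2
        have hxeq : x = (2 * u.1, 6) := Prod.ext_iff.mpr ⟨by omega, hx2⟩
        rw [hxeq] at hr
        omega
    have hfin4 : (Fib (U B) k ∩ {x | x.1 = 4}).Finite := by
      apply Set.Finite.subset (Set.Finite.prod (Set.finite_singleton 4)
        (Set.finite_Iic (2 * k + 4)))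
      rintro x ⟨⟨⟨u, hu, huu⟩, hr⟩, hx1⟩
      simp only [Set.mem_setOf_eq] at hx1
      have hx1' : x.1 = u.1 + u.1 := by rw [← huu]; simp
      have hx2' : x.2 = u.2 + u.2 := by rw [← huu]; simp
      have hcu := U_coord hu.1
      refine ⟨Set.mem_singleton_iff.mpr hx1, Set.mem_Iic.mpr ?_⟩
      have hcol := r_col2 (B := B) hcu.2
      have hxeq : x = (4, 2 * u.2) := Prod.ext_iff.mpr ⟨hx1, by omega⟩
      rw [hxeq] at hr
      omega
    obtain ⟨x, hxF, hxn⟩ :=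
      (hinf.diff ((hfin2.union hfin3).union hfin4)).nonempty
    simp only [Set.mem_union, Set.mem_inter_iff, Set.mem_setOf_eq, not_or, not_and] at hxn
    obtain ⟨⟨u, hu, huu⟩, hr⟩ := hxF
    have hx1 : x.1 = u.1 + u.1 := by rw [← huu]; simp
    have hx2 : x.2 = u.2 + u.2 := by rw [← huu]; simp
    have hFx : x ∈ Fib (U B) k := ⟨⟨u, hu, huu⟩, hr⟩
    rcases ind_over hu with h1 | h2 | h3 | h4
    · -- signal case
      have hua : u.2 ∈ A B := by
        rcases hu.1 with ⟨h, _⟩ | ⟨_, h⟩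
        · omega
        · exact h
      have hxeq : x = (2, 2 * u.2) := Prod.ext_iff.mpr ⟨by omega, by omega⟩
      rw [hxeq] at hr
      rw [r_signal hua] at hr
      rcases Pa_all hua with h | ⟨n, han, h⟩
      · exact ⟨0, Or.inl rfl, by omega⟩
      · exact ⟨bet B n, bet_mem B n, by omega⟩
    · exact absurd (by omega : x.2 = 4) (hxn.1.1 hFx)
    · exact absurd (by omega : x.2 = 6) (hxn.1.2 hFx)
    · exact absurd (by omega : x.1 = 4) (hxn.2 hFx)
  · rintro ⟨m, hm, rfl⟩
    refine Set.infinite_of_injective_forall_mem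
      (f := fun t : ℕ => (((2 : ℕ), 2 * c (Nat.pair m t)) : ℕ × ℕ)) ?_ ?_
    · intro t t' htt
      simp only [Prod.mk.injEq, true_and] at htt
      have := c_inj (by omega : c (Nat.pair m t) = c (Nat.pair m t'))
      exact (Nat.pair_eq_pair.mp this).2
    · intro t
      refine ⟨⟨((1 : ℕ), c (Nat.pair m t)), ind_L1 (cn_mem_A B _), ?_⟩, ?_⟩
      · show ((1 : ℕ), c (Nat.pair m t)) + ((1 : ℕ), c (Nat.pair m t))
          = ((2 : ℕ), 2 * c (Nat.pair m t))
        refine Prod.ext_iff.mpr ⟨rfl, ?_⟩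
        show c (Nat.pair m t) + c (Nat.pair m t) = 2 * c (Nat.pair m t)
        omega
      · show r (U B) ((2 : ℕ), 2 * c (Nat.pair m t)) = 2 * m + 1
        rw [r_signal (cn_mem_A B _), Pa_center, bet_pair B hB m t hm]

theorem core {B C : Set ℕ} (hB : B ⊆ Set.Ici 1) (hC : C ⊆ Set.Ici 1)
    (φ : ℕ × ℕ → ℕ × ℕ) (hbij : Set.BijOn φ (U B) (U C))
    (hadd : ∀ a ∈ U B, ∀ b ∈ U B, φ (a + b) = φ a + φ b) : B = C := by
  have hK := K_eq_of_iso (U B) (U C) (U_closed B) (U_closed C) φ hbij hadd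
  rw [K_U B hB, K_U C hC] at hK
  ext m
  constructor
  · intro hm
    have h1 : (2 * m + 1 : ℕ) ∈ {k | ∃ m', (m' = 0 ∨ m' ∈ C) ∧ k = 2 * m' + 1} := by
      rw [← hK]
      exact ⟨m, Or.inr hm, rfl⟩
    obtain ⟨m', hm', heq⟩ := h1
    have hmm : m' = m := by omega
    subst hmm
    rcases hm' with h0 | h0
    · exact absurd (hB hm) (by simp [h0])
    · exact h0
  · intro hm
    have h1 : (2 * m + 1 : ℕ) ∈ {k | ∃ m', (m' = 0 ∨ m' ∈ B) ∧ k = 2 * m' + 1} := by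
      rw [hK]
      exact ⟨m, Or.inr hm, rfl⟩
    obtain ⟨m', hm', heq⟩ := h1
    have hmm : m' = m := by omega
    subst hmm
    rcases hm' with h0 | h0
    · exact absurd (hC hm) (by simp [h0])
    · exact h0

/-! ### Transfer to S × T -/

section Assembly

variable {S T : Type*} [Semigroup S] [Semigroup T]

def fmap (s : S) (t : T) (p : ℕ × ℕ) : S × T := (spow s (p.1 - 1), spow t (p.2 - 1))

lemma fmap_mul (s : S) (t : T) {p q : ℕ × ℕ} (hp : 1 ≤ p.1 ∧ 1 ≤ p.2)
    (hq : 1 ≤ q.1 ∧ 1 ≤ q.2) :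
    fmap s t p * fmap s t q = fmap s t (p + q) := by
  unfold fmap
  rw [Prod.mk_mul_mk, spow_mul_spow, spow_mul_spow]
  have h1 : p.1 - 1 + (q.1 - 1) + 1 = (p + q).1 - 1 := by
    have : (p + q).1 = p.1 + q.1 := rfl
    omega
  have h2 : p.2 - 1 + (q.2 - 1) + 1 = (p + q).2 - 1 := by
    have : (p + q).2 = p.2 + q.2 := rfl
    omega
  rw [h1, h2]

lemma fmap_inj {s : S} {t : T} (hs : Function.Injective (spow s))
    (ht : Function.Injective (spow t)) {p q : ℕ × ℕ}
    (hp : 1 ≤ p.1 ∧ 1 ≤ p.2) (hq : 1 ≤ q.1 ∧ 1 ≤ q.2)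
    (h : fmap s t p = fmap s t q) : p = q := by
  unfold fmap at h
  rw [Prod.ext_iff] at h
  simp only at h
  have h1 := hs h.1
  have h2 := ht h.2
  exact Prod.ext_iff.mpr ⟨by omega, by omega⟩

/-- the subsemigroup of `S × T` associated to a parameter set `B` -/
def sub (s : S) (t : T) (B : Set ℕ) : Subsemigroup (S × T) where
  carrier := fmap s t '' U B
  mul_mem' := by
    rintro x y ⟨p, hp, rfl⟩ ⟨q, hq, rfl⟩
    have hpc := U_coord hp
    have hqc := U_coord hq
    exact ⟨p + q, U_closed B p hp q hq,
      (fmap_mul s t ⟨hpc.1, by omega⟩ ⟨hqc.1, by omega⟩).symm⟩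

lemma pull {s : S} {t : T} (hs : Function.Injective (spow s))
    (ht : Function.Injective (spow t)) {B C : Set ℕ}
    (hB : B ⊆ Set.Ici 1) (hC : C ⊆ Set.Ici 1)
    (h : Nonempty (sub s t B ≃* sub s t C)) : B = C := by
  obtain ⟨ψ⟩ := h
  classical
  have hBc : ∀ p : ℕ × ℕ, p ∈ U B → fmap s t p ∈ sub s t B := fun p hp => ⟨p, hp, rfl⟩
  have hCc : ∀ p : ℕ × ℕ, p ∈ U C → fmap s t p ∈ sub s t C := fun p hp => ⟨p, hp, rfl⟩
  set φ : ℕ × ℕ → ℕ × ℕ := fun p =>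
    if hp : p ∈ U B then
      Function.invFunOn (fmap s t) (U C) ((ψ ⟨fmap s t p, hBc p hp⟩ : ↥(sub s t C)) : S × T)
    else p with hφ
  have hkey : ∀ p, ∀ hp : p ∈ U B, φ p ∈ U C ∧
      fmap s t (φ p) = ((ψ ⟨fmap s t p, hBc p hp⟩ : ↥(sub s t C)) : S × T) := by
    intro p hp
    have hmem : ((ψ ⟨fmap s t p, hBc p hp⟩ : ↥(sub s t C)) : S × T) ∈ fmap s t '' U C :=
      (ψ ⟨fmap s t p, hBc p hp⟩).2
    obtain ⟨q, hq, hfq⟩ := hmem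
    have hex : ∃ a ∈ U C, fmap s t a =
        ((ψ ⟨fmap s t p, hBc p hp⟩ : ↥(sub s t C)) : S × T) := ⟨q, hq, hfq⟩
    rw [hφ]
    simp only [dif_pos hp]
    exact ⟨Function.invFunOn_mem hex, Function.invFunOn_eq hex⟩
  have hco : ∀ p : ℕ × ℕ, p ∈ U B → 1 ≤ p.1 ∧ 1 ≤ p.2 := by
    intro p hp; have := U_coord hp; omega
  have hco' : ∀ p : ℕ × ℕ, p ∈ U C → 1 ≤ p.1 ∧ 1 ≤ p.2 := by
    intro p hp; have := U_coord hp; omega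
  have hbij : Set.BijOn φ (U B) (U C) := by
    refine ⟨fun p hp => (hkey p hp).1, ?_, ?_⟩
    · intro p hp q hq hpq
      have h1 : fmap s t (φ p) = fmap s t (φ q) := by rw [hpq]
      rw [(hkey p hp).2, (hkey q hq).2] at h1
      have h2 : ψ ⟨fmap s t p, hBc p hp⟩ = ψ ⟨fmap s t q, hBc q hq⟩ := Subtype.ext h1
      have h3 := ψ.injective h2
      have h4 : fmap s t p = fmap s t q := congrArg Subtype.val h3
      exact fmap_inj hs ht (hco p hp) (hco q hq) h4
    · intro y hy
      obtain ⟨p, hp, hfp⟩ := (ψ.symm ⟨fmap s t y, hCc y hy⟩).2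
      refine ⟨p, hp, ?_⟩
      have h1 : (⟨fmap s t p, hBc p hp⟩ : ↥(sub s t B)) = ψ.symm ⟨fmap s t y, hCc y hy⟩ :=
        Subtype.ext hfp
      have h2 : fmap s t (φ p) = fmap s t y := by
        rw [(hkey p hp).2, h1, MulEquiv.apply_symm_apply]
      exact fmap_inj hs ht (hco' _ (hkey p hp).1) (hco' y hy) h2
  have hadd : ∀ a ∈ U B, ∀ b ∈ U B, φ (a + b) = φ a + φ b := by
    intro a ha b hb
    have hab : a + b ∈ U B := U_closed B a ha b hb
    have h1 : (⟨fmap s t (a + b), hBc _ hab⟩ : ↥(sub s t B)) =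
        ⟨fmap s t a, hBc a ha⟩ * ⟨fmap s t b, hBc b hb⟩ :=
      Subtype.ext (fmap_mul s t (hco a ha) (hco b hb)).symm
    have h2 : fmap s t (φ (a + b)) = fmap s t (φ a) * fmap s t (φ b) := by
      rw [(hkey _ hab).2, h1, map_mul]
      rw [(hkey a ha).2, (hkey b hb).2]
      rfl
    rw [fmap_mul s t (hco' _ (hkey a ha).1) (hco' _ (hkey b hb).1)] at h2
    have h3 : φ a + φ b ∈ U C :=
      U_closed C _ (hkey a ha).1 _ (hkey b hb).1
    exact fmap_inj hs ht (hco' _ (hkey _ hab).1) (hco' _ h3) h2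
  exact core hB hC φ hbij hadd

end Assembly

end NNS

/-- If `S` and `T` are semigroups containing elements of infinite order
(i.e. elements all of whose powers are pairwise distinct), then `S × T`
contains uncountably many pairwise non-isomorphic subsemigroups. -/
theorem uncountably_many_nonisomorphic_subsemigroups_of_prod
    {S T : Type*} [Semigroup S] [Semigroup T]
    (s : S) (hs : Function.Injective (spow s))
    (t : T) (ht : Function.Injective (spow t)) :
    ∃ F : Set (Subsemigroup (S × T)), ¬ F.Countable ∧
      ∀ A ∈ F, ∀ B ∈ F, A ≠ B → ¬ Nonempty (A ≃* B) := by
  classical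
  refine ⟨(fun B => NNS.sub s t B) '' {B : Set ℕ | B ⊆ Set.Ici 1}, ?_, ?_⟩
  · intro hcnt
    -- countability of the family would give countability of `Set ℕ`
    have hCF : Countable ↥((fun B => NNS.sub s t B) '' {B : Set ℕ | B ⊆ Set.Ici 1}) :=
      Set.countable_coe_iff.mpr hcnt
    have hinj : ∀ B ∈ {B : Set ℕ | B ⊆ Set.Ici 1}, ∀ C ∈ {B : Set ℕ | B ⊆ Set.Ici 1},
        NNS.sub s t B = NNS.sub s t C → B = C := by
      intro B hB' C hC' heq
      exact NNS.pull hs ht hB' hC' (heq ▸ ⟨MulEquiv.refl _⟩)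
    have hS : Countable ↥{B : Set ℕ | B ⊆ Set.Ici 1} := by
      refine Function.Injective.countable
        (f := fun x : ↥{B : Set ℕ | B ⊆ Set.Ici 1} =>
          (⟨NNS.sub s t x.1, ⟨x.1, x.2, rfl⟩⟩ :
            ↥((fun B => NNS.sub s t B) '' {B : Set ℕ | B ⊆ Set.Ici 1}))) ?_
      intro x y hxy
      have h1 : NNS.sub s t x.1 = NNS.sub s t y.1 := congrArg Subtype.val hxy
      exact Subtype.ext (hinj x.1 x.2 y.1 y.2 h1)
    have hset : Countable (Set ℕ) := by
      refine Function.Injective.countable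
        (f := fun X : Set ℕ => (⟨(fun n => n + 1) '' X, ?_⟩ : ↥{B : Set ℕ | B ⊆ Set.Ici 1})) ?_
      · rintro y ⟨x, hx, rfl⟩
        exact Set.mem_Ici.mpr (Nat.le_add_left 1 x)
      · intro X Y hXY
        have h1 : (fun n => n + 1) '' X = (fun n => n + 1) '' Y := congrArg Subtype.val hXY
        exact Set.image_injective.mpr (fun a b hab => by simpa using hab) h1
    obtain ⟨f, hf⟩ := (countable_iff_exists_injective (Set ℕ)).mp hset
    exact Function.cantor_injective f hf
  · rintro A' ⟨B, hB', rfl⟩ B' ⟨C, hC', rfl⟩ hne hiso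
    exact hne (congrArg (fun B => NNS.sub s t B) (NNS.pull hs ht hB' hC' hiso))
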